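/- There exists a universal constant C such that for all x, z in [0,1], ∫₀^∞ ∫₀¹ |G_s(x,y) - G_s(z,y)|² dy ds ≤ C |x - z|. -/

import Mathlib

open Real MeasureTheory Set Filter

noncomputable section

/-- The Dirichlet heat kernel on [0,1]. -/
def G (t x y : ℝ) : ℝ :=
  2 * ∑' n : ℕ, Real.sin (((n : ℝ) + 1) * Real.pi * x) *
      Real.sin (((n : ℝ) + 1) * Real.pi * y) *
      Real.exp (-(((n : ℝ) + 1) ^ 2) * Real.pi ^ 2 * t / 2)


lemma DK_summable_exp {c : ℝ} (hc : 0 < c) :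
    Summable (fun n : ℕ => Real.exp (-(((n : ℝ) + 1) ^ 2) * c)) := by
  refine Summable.of_nonneg_of_le (fun n => (Real.exp_pos _).le) (fun n => ?_)
    (summable_geometric_of_lt_one (Real.exp_pos (-c)).le
      (Real.exp_lt_one_iff.mpr (by linarith)))
  have : Real.exp (-c) ^ n = Real.exp ((n : ℝ) * (-c)) := by
    rw [← Real.exp_nat_mul]
  rw [this]
  apply Real.exp_le_exp.mpr
  nlinarith [mul_nonneg (by positivity : (0:ℝ) ≤ (n:ℝ)^2 + (n:ℝ) + 1) hc.le]

lemma DK_integral_cos_mul {c : ℝ} (hc : c ≠ 0) :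
    ∫ y in (0:ℝ)..1, Real.cos (c * y) = Real.sin c / c := by
  rw [intervalIntegral.integral_comp_mul_left Real.cos hc]
  simp [integral_cos, div_eq_inv_mul]

lemma DK_sin_mul_sin (a b : ℝ) :
    Real.sin a * Real.sin b = (Real.cos (a - b) - Real.cos (a + b)) / 2 := by
  rw [Real.cos_sub, Real.cos_add]; ring

lemma DK_orth (n m : ℕ) :
    (∫ y in (0:ℝ)..1, Real.sin (((n : ℝ) + 1) * Real.pi * y) *
      Real.sin (((m : ℝ) + 1) * Real.pi * y)) = if n = m then 1/2 else 0 := by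
  have hπ := Real.pi_pos
  have key : ∀ y : ℝ, Real.sin (((n : ℝ) + 1) * Real.pi * y) *
      Real.sin (((m : ℝ) + 1) * Real.pi * y)
      = (Real.cos ((((n:ℝ) - m) * Real.pi) * y) -
         Real.cos ((((n:ℝ) + m + 2) * Real.pi) * y)) / 2 := by
    intro y
    rw [DK_sin_mul_sin]
    congr 2
    · congr 1; ring
    · congr 1; ring
  have hint : ∀ c : ℝ, IntervalIntegrable (fun y => Real.cos (c * y)) volume 0 1 :=
    fun c => (Real.continuous_cos.comp (continuous_const.mul continuous_id)).intervalIntegrable 0 1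
  simp only [key]
  rw [intervalIntegral.integral_div, intervalIntegral.integral_sub (hint _) (hint _)]
  have h2 : (∫ y in (0:ℝ)..1, Real.cos ((((n:ℝ) + m + 2) * Real.pi) * y)) = 0 := by
    rw [DK_integral_cos_mul (by positivity)]
    have : ((n:ℝ) + m + 2) * Real.pi = ((n + m + 2 : ℕ) : ℝ) * Real.pi := by push_cast; ring
    rw [this, Real.sin_nat_mul_pi, zero_div]
  rcases eq_or_ne n m with rfl | hnm
  · have h1 : (∫ y in (0:ℝ)..1, Real.cos ((((n:ℝ) - n) * Real.pi) * y)) = 1 := by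
      simp
    rw [h1, h2]; norm_num
  · have hc : ((n:ℝ) - m) * Real.pi ≠ 0 := by
      have : (n:ℝ) ≠ m := by exact_mod_cast hnm
      apply mul_ne_zero (sub_ne_zero.mpr this) hπ.ne'
    have h1 : (∫ y in (0:ℝ)..1, Real.cos ((((n:ℝ) - m) * Real.pi) * y)) = 0 := by
      rw [DK_integral_cos_mul hc]
      have : ((n:ℝ) - m) * Real.pi = (((n:ℤ) - m : ℤ) : ℝ) * Real.pi := by push_cast; ring
      rw [this, Real.sin_int_mul_pi, zero_div]
    rw [h1, h2]; simp [hnm]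

lemma DK_integral_exp_neg_mul {b : ℝ} (hb : 0 < b) :
    ∫ s in Set.Ioi (0:ℝ), Real.exp (-b * s) = 1 / b := by
  have := integral_comp_mul_left_Ioi (fun u => Real.exp (-u)) 0 hb
  simp only [mul_zero, integral_exp_neg_Ioi_zero, smul_eq_mul, mul_one] at this
  simp_rw [neg_mul]
  rw [this, one_div]

lemma DK_tail_bound {N : ℕ} (hN : 1 ≤ N) :
    ∑' n : ℕ, 1 / (((n : ℝ) + N + 1)) ^ 2 ≤ 1 / (N:ℝ) := by
  apply Real.tsum_le_of_sum_range_le (fun n => by positivity)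
  intro m
  have hNpos : (0:ℝ) < N := by exact_mod_cast hN
  calc ∑ i ∈ Finset.range m, 1 / (((i : ℝ) + N + 1)) ^ 2
      ≤ ∑ i ∈ Finset.range m, (1 / ((i : ℝ) + N) - 1 / ((i : ℝ) + N + 1)) := by
        apply Finset.sum_le_sum
        intro i _
        have hb : (0:ℝ) < (i : ℝ) + N := by positivity
        have hb1 : (0:ℝ) < (i : ℝ) + N + 1 := by positivity
        rw [div_sub_div _ _ hb.ne' hb1.ne']
        rw [div_le_div_iff₀ (by positivity) (by positivity)]
        nlinarith
    _ = (fun j : ℕ => 1 / ((j : ℝ) + N)) 0 - (fun j : ℕ => 1 / ((j : ℝ) + N)) m := by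
        rw [← Finset.sum_range_sub' (fun j : ℕ => 1 / ((j : ℝ) + N)) m]
        apply Finset.sum_congr rfl
        intro i _
        push_cast
        ring
    _ ≤ 1 / (N:ℝ) := by
        have : (0:ℝ) ≤ 1 / ((m : ℝ) + N) := by positivity
        simp only [Nat.cast_zero, zero_add]
        linarith

lemma DK_basel_bound : ∑' n : ℕ, 1 / (((n : ℝ) + 1)) ^ 2 ≤ 2 := by
  apply Real.tsum_le_of_sum_range_le (fun n => by positivity)
  intro m
  calc ∑ i ∈ Finset.range m, 1 / (((i : ℝ) + 1)) ^ 2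
      ≤ ∑ i ∈ Finset.range m, (2 / ((i : ℝ) + 1) - 2 / ((i : ℝ) + 2)) := by
        apply Finset.sum_le_sum
        intro i _
        have h1 : (0:ℝ) < (i : ℝ) + 1 := by positivity
        have h2 : (0:ℝ) < (i : ℝ) + 2 := by positivity
        rw [div_sub_div _ _ h1.ne' h2.ne']
        rw [div_le_div_iff₀ (by positivity) (by positivity)]
        nlinarith
    _ = (fun j : ℕ => 2 / ((j : ℝ) + 1)) 0 - (fun j : ℕ => 2 / ((j : ℝ) + 1)) m := by
        rw [← Finset.sum_range_sub' (fun j : ℕ => 2 / ((j : ℝ) + 1)) m]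
        apply Finset.sum_congr rfl
        intro i _
        push_cast
        ring
    _ ≤ 2 := by
        have : (0:ℝ) ≤ 2 / ((m : ℝ) + 1) := by positivity
        simp only [Nat.cast_zero, zero_add]
        norm_num
        linarith

lemma DK_summable_inv_sq : Summable (fun n : ℕ => 1 / (((n : ℝ) + 1)) ^ 2) := by
  have h := (Real.summable_one_div_nat_pow (p := 2)).mpr one_lt_two
  have h2 := (summable_nat_add_iff (f := fun n : ℕ => 1 / (n : ℝ) ^ 2) 1).mpr h
  exact h2.congr (fun n => by push_cast; ring)


def DKa (x z : ℝ) (n : ℕ) : ℝ :=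
  Real.sin (((n:ℝ)+1) * Real.pi * x) - Real.sin (((n:ℝ)+1) * Real.pi * z)

def DKc (x z s : ℝ) (n : ℕ) : ℝ :=
  DKa x z n * Real.exp (-(((n:ℝ)+1)^2) * Real.pi^2 * s / 2)

lemma DK_summable_E {s : ℝ} (hs : 0 < s) :
    Summable (fun n : ℕ => Real.exp (-(((n:ℝ)+1)^2) * Real.pi^2 * s / 2)) := by
  have hpos : 0 < Real.pi^2 * s / 2 := by positivity
  exact (DK_summable_exp hpos).congr (fun n => by congr 1; ring)

lemma DK_abs_c_le {x z s : ℝ} (hs : 0 < s) (n : ℕ) :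
    |DKc x z s n| ≤ 2 * Real.exp (-(((n:ℝ)+1)^2) * Real.pi^2 * s / 2) := by
  rw [DKc, abs_mul, abs_of_pos (Real.exp_pos _)]
  have h1 : |DKa x z n| ≤ 2 := by
    rw [DKa]
    calc |_ - _| ≤ |Real.sin (((n:ℝ)+1) * Real.pi * x)| + |Real.sin (((n:ℝ)+1) * Real.pi * z)| :=
          abs_sub _ _
      _ ≤ 1 + 1 := add_le_add (Real.abs_sin_le_one _) (Real.abs_sin_le_one _)
      _ = 2 := by norm_num
  exact mul_le_mul_of_nonneg_right h1 (Real.exp_pos _).le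

lemma DK_summable_abs_c {x z s : ℝ} (hs : 0 < s) :
    Summable (fun n : ℕ => |DKc x z s n|) :=
  Summable.of_nonneg_of_le (fun n => abs_nonneg _) (fun n => DK_abs_c_le hs n)
    ((DK_summable_E hs).mul_left 2)

lemma DK_Gdiff (x z s : ℝ) (hs : 0 < s) (y : ℝ) :
    G s x y - G s z y = 2 * ∑' n : ℕ, DKc x z s n * Real.sin (((n:ℝ)+1) * Real.pi * y) := by
  have hsum : ∀ u : ℝ, Summable (fun n : ℕ => Real.sin (((n:ℝ)+1) * Real.pi * u) *
      Real.sin (((n:ℝ)+1) * Real.pi * y) *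
      Real.exp (-(((n:ℝ)+1)^2) * Real.pi^2 * s / 2)) := by
    intro u
    apply Summable.of_norm
    apply Summable.of_nonneg_of_le (fun n => norm_nonneg _) (fun n => ?_) (DK_summable_E hs)
    rw [norm_mul, norm_mul]
    calc ‖Real.sin (((n:ℝ)+1) * Real.pi * u)‖ * ‖Real.sin (((n:ℝ)+1) * Real.pi * y)‖ *
          ‖Real.exp (-(((n:ℝ)+1)^2) * Real.pi^2 * s / 2)‖
        ≤ 1 * 1 * Real.exp (-(((n:ℝ)+1)^2) * Real.pi^2 * s / 2) := by
          apply mul_le_mul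
          · exact mul_le_mul (Real.abs_sin_le_one _) (Real.abs_sin_le_one _)
              (norm_nonneg _) zero_le_one
          · rw [Real.norm_eq_abs, abs_of_pos (Real.exp_pos _)]
          · exact norm_nonneg _
          · norm_num
      _ = Real.exp (-(((n:ℝ)+1)^2) * Real.pi^2 * s / 2) := by ring
  rw [G, G, ← mul_sub, ← (hsum x).tsum_sub (hsum z)]
  congr 1
  exact tsum_congr (fun n => by rw [DKc, DKa]; ring)

set_option maxHeartbeats 1600000 in
lemma DK_inner (x z s : ℝ) (hs : 0 < s) :
    (∫ y in (0:ℝ)..1, (G s x y - G s z y)^2)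
      = ∑' n : ℕ, 2 * (DKc x z s n)^2 := by
  set c := DKc x z s with hc_def
  have hcabs : Summable (fun n : ℕ => |c n|) := DK_summable_abs_c hs
  have hcnorm : ∀ y : ℝ, Summable (fun n : ℕ => ‖c n * Real.sin (((n:ℝ)+1) * Real.pi * y)‖) := by
    intro y
    apply Summable.of_nonneg_of_le (fun n => norm_nonneg _) (fun n => ?_) hcabs
    rw [norm_mul, Real.norm_eq_abs, Real.norm_eq_abs]
    calc |c n| * |Real.sin (((n:ℝ)+1) * Real.pi * y)| ≤ |c n| * 1 :=
          mul_le_mul_of_nonneg_left (Real.abs_sin_le_one _) (abs_nonneg _)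
      _ = |c n| := mul_one _
  -- F: the double-indexed family
  set F : ℕ × ℕ → ℝ → ℝ := fun p y => (4 * (c p.1 * c p.2)) *
      (Real.sin (((p.1:ℝ)+1) * Real.pi * y) * Real.sin (((p.2:ℝ)+1) * Real.pi * y)) with hF_def
  have hsq : ∀ y : ℝ, (G s x y - G s z y)^2 = ∑' p : ℕ × ℕ, F p y := by
    intro y
    rw [DK_Gdiff x z s hs y]
    have hmul := tsum_mul_tsum_of_summable_norm (hcnorm y) (hcnorm y)
    calc (2 * ∑' n : ℕ, c n * Real.sin (((n:ℝ)+1) * Real.pi * y))^2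
        = 4 * ((∑' n : ℕ, c n * Real.sin (((n:ℝ)+1) * Real.pi * y)) *
            (∑' n : ℕ, c n * Real.sin (((n:ℝ)+1) * Real.pi * y))) := by ring
      _ = 4 * ∑' p : ℕ × ℕ, (c p.1 * Real.sin (((p.1:ℝ)+1) * Real.pi * y)) *
            (c p.2 * Real.sin (((p.2:ℝ)+1) * Real.pi * y)) := by rw [hmul]
      _ = ∑' p : ℕ × ℕ, F p y := by
          rw [← tsum_mul_left]
          exact tsum_congr (fun p => by rw [hF_def]; ring)
  have hcprod : Summable (fun p : ℕ × ℕ => |c p.1| * |c p.2|) := by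
    have h' : Summable (fun n : ℕ => ‖|c n|‖) := hcabs.congr (fun n => by rw [Real.norm_eq_abs, abs_abs])
    exact summable_mul_of_summable_norm h' h'
  have hF_cont : ∀ p : ℕ × ℕ, Continuous (F p) := by
    intro p
    apply Continuous.mul continuous_const
    exact ((Real.continuous_sin.comp (continuous_const.mul continuous_id)).mul
      (Real.continuous_sin.comp (continuous_const.mul continuous_id)))
  have hF_int : ∀ p : ℕ × ℕ, Integrable (F p) (volume.restrict (Ioc (0:ℝ) 1)) :=
    fun p => (hF_cont p).integrableOn_Ioc
  have hF_bound : ∀ p : ℕ × ℕ, ∀ y : ℝ, ‖F p y‖ ≤ 4 * (|c p.1| * |c p.2|) := by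
    intro p y
    rw [hF_def]
    have h1 : |Real.sin (((p.1:ℝ)+1) * Real.pi * y) * Real.sin (((p.2:ℝ)+1) * Real.pi * y)| ≤ 1 := by
      rw [abs_mul]
      exact mul_le_one₀ (Real.abs_sin_le_one _) (abs_nonneg _) (Real.abs_sin_le_one _)
    rw [Real.norm_eq_abs]
    calc |4 * (c p.1 * c p.2) * (Real.sin (((p.1:ℝ)+1) * Real.pi * y) *
          Real.sin (((p.2:ℝ)+1) * Real.pi * y))|
        = 4 * (|c p.1| * |c p.2|) * |Real.sin (((p.1:ℝ)+1) * Real.pi * y) *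
          Real.sin (((p.2:ℝ)+1) * Real.pi * y)| := by
          rw [abs_mul, abs_mul, abs_mul]
          norm_num
      _ ≤ 4 * (|c p.1| * |c p.2|) * 1 := mul_le_mul_of_nonneg_left h1 (by positivity)
      _ = 4 * (|c p.1| * |c p.2|) := mul_one _
  have hF_norm_sum : Summable (fun p : ℕ × ℕ => ∫ y, ‖F p y‖ ∂(volume.restrict (Ioc (0:ℝ) 1))) := by
    apply Summable.of_nonneg_of_le (fun p => integral_nonneg (fun y => norm_nonneg _)) (fun p => ?_)
      (hcprod.mul_left 4)
    have h1 : ‖∫ y, ‖F p y‖ ∂(volume.restrict (Ioc (0:ℝ) 1))‖ ≤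
        (4 * (|c p.1| * |c p.2|)) * (volume.restrict (Ioc (0:ℝ) 1) Set.univ).toReal := by
      apply norm_integral_le_of_norm_le_const
      filter_upwards with y
      rw [norm_norm]
      exact hF_bound p y
    rw [Real.norm_eq_abs, abs_of_nonneg (integral_nonneg (fun y => norm_nonneg _))] at h1
    simp only [Measure.restrict_apply_univ, Real.volume_Ioc] at h1
    calc ∫ y, ‖F p y‖ ∂(volume.restrict (Ioc (0:ℝ) 1)) ≤
        (4 * (|c p.1| * |c p.2|)) * (ENNReal.ofReal (1 - 0)).toReal := h1
      _ = 4 * (|c p.1| * |c p.2|) := by norm_num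
  rw [intervalIntegral.integral_of_le zero_le_one]
  calc (∫ y in Ioc (0:ℝ) 1, (G s x y - G s z y)^2)
      = ∫ y in Ioc (0:ℝ) 1, ∑' p : ℕ × ℕ, F p y := by
        apply integral_congr_ae
        filter_upwards with y using hsq y
    _ = ∑' p : ℕ × ℕ, ∫ y in Ioc (0:ℝ) 1, F p y :=
        (integral_tsum_of_summable_integral_norm hF_int hF_norm_sum).symm
    _ = ∑' p : ℕ × ℕ, (if p.1 = p.2 then 2 * (c p.1 * c p.2) else 0) := by
        apply tsum_congr
        intro p
        rw [hF_def]
        rw [MeasureTheory.integral_const_mul]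
        rw [← intervalIntegral.integral_of_le zero_le_one, DK_orth]
        by_cases h : p.1 = p.2 <;> simp [h] <;> ring
    _ = ∑' n : ℕ, 2 * (c n)^2 := by
        have hg : Summable (fun p : ℕ × ℕ => (if p.1 = p.2 then 2 * (c p.1 * c p.2) else 0)) := by
          apply Summable.of_nonneg_of_le (fun p => ?_) (fun p => ?_) (hcprod.mul_left 2)
          · rcases p with ⟨i, j⟩
            by_cases h : i = j
            · subst h
              rw [if_pos rfl]
              nlinarith [mul_self_nonneg (c i)]
            · simp [h]
          · rcases p with ⟨i, j⟩
            by_cases h : i = j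
            · subst h
              rw [if_pos rfl]
              have : c i * c i ≤ |c i| * |c i| := by
                rw [← abs_mul]; exact le_abs_self _
              linarith
            · simp only [if_neg h]
              positivity
        have hrow : ∀ n : ℕ, Summable (fun m : ℕ => if (n, m).1 = (n, m).2 then 2 * (c (n, m).1 * c (n, m).2) else 0) := by
          intro n
          apply ((hasSum_ite_eq n (2 * (c n * c n))).summable).congr
          intro m
          by_cases h : m = n
          · subst h; simp
          · simp [h, Ne.symm h]
        rw [hg.tsum_prod' hrow]
        apply tsum_congr
        intro n
        have : ∀ m : ℕ, (if n = m then 2 * (c n * c m) else 0)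
            = (if m = n then 2 * (c n)^2 else 0) := by
          intro m
          by_cases h : n = m
          · subst h; simp [sq]
          · simp [h, Ne.symm h]
        simp only [this]
        exact tsum_ite_eq n (fun _ => 2 * (c n)^2)

lemma DK_sin_lip (u v : ℝ) : |Real.sin u - Real.sin v| ≤ |u - v| := by
  rw [Real.sin_sub_sin, abs_mul, abs_mul]
  have h1 : |Real.sin ((u - v) / 2)| ≤ |(u - v) / 2| := Real.abs_sin_le_abs
  have h2 : |Real.cos ((u + v) / 2)| ≤ 1 := Real.abs_cos_le_one _
  have h3 : |(u - v) / 2| = |u - v| / 2 := by rw [abs_div]; norm_num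
  have h4 : (0:ℝ) ≤ |Real.sin ((u - v) / 2)| := abs_nonneg _
  calc |(2:ℝ)| * |Real.sin ((u - v) / 2)| * |Real.cos ((u + v) / 2)|
      ≤ |(2:ℝ)| * |(u - v) / 2| * 1 := by
        apply mul_le_mul (mul_le_mul le_rfl h1 h4 (abs_nonneg _)) h2 (abs_nonneg _) (by positivity)
    _ = |u - v| := by rw [h3, abs_two]; ring

lemma DK_c_sq (x z s : ℝ) (n : ℕ) :
    2 * (DKc x z s n)^2 = 2 * (DKa x z n)^2 * Real.exp (-((((n:ℝ)+1)^2) * Real.pi^2) * s) := by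
  rw [DKc, mul_pow]
  have : Real.exp (-(((n:ℝ)+1)^2) * Real.pi^2 * s / 2) ^ 2
      = Real.exp (-((((n:ℝ)+1)^2) * Real.pi^2) * s) := by
    rw [← Real.exp_nat_mul]
    congr 1
    push_cast
    ring
  rw [this]; ring

theorem dirichlet_kernel_L2_space_increment :
    ∃ C : ℝ, 0 < C ∧ ∀ x z : ℝ, x ∈ Set.Icc (0 : ℝ) 1 → z ∈ Set.Icc (0 : ℝ) 1 →
      (∫ s in Set.Ioi (0 : ℝ), ∫ y in (0 : ℝ)..1, (G s x y - G s z y) ^ 2)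
        ≤ C * |x - z| := by
  refine ⟨10, by norm_num, ?_⟩
  intro x z _ _
  have hπ := Real.pi_pos
  have hπ2 : (9:ℝ) ≤ Real.pi ^ 2 := by nlinarith [Real.pi_gt_three]
  set h : ℝ := |x - z| with hh_def
  have hh0 : 0 ≤ h := abs_nonneg _
  set a : ℕ → ℝ := DKa x z with ha_def
  set t : ℕ → ℝ := fun n => 2 * (a n)^2 * (1 / (((n:ℝ)+1)^2 * Real.pi^2)) with ht_def
  -- basic per-term facts
  have ht_nonneg : ∀ n, 0 ≤ t n := fun n => by positivity
  have ha_le2 : ∀ n, |a n| ≤ 2 := by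
    intro n
    rw [ha_def, DKa]
    calc |_ - _| ≤ |Real.sin (((n:ℝ)+1) * Real.pi * x)| + |Real.sin (((n:ℝ)+1) * Real.pi * z)| :=
          abs_sub _ _
      _ ≤ 1 + 1 := add_le_add (Real.abs_sin_le_one _) (Real.abs_sin_le_one _)
      _ = 2 := by norm_num
  have ha_lin : ∀ n, |a n| ≤ ((n:ℝ)+1) * Real.pi * h := by
    intro n
    rw [ha_def, DKa]
    calc |Real.sin (((n:ℝ)+1) * Real.pi * x) - Real.sin (((n:ℝ)+1) * Real.pi * z)|
        ≤ |((n:ℝ)+1) * Real.pi * x - ((n:ℝ)+1) * Real.pi * z| := DK_sin_lip _ _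
      _ = ((n:ℝ)+1) * Real.pi * h := by
          rw [← mul_sub, abs_mul, abs_of_pos (by positivity : (0:ℝ) < ((n:ℝ)+1) * Real.pi)]
  have ht2 : ∀ n, t n ≤ 2 * h^2 := by
    intro n
    have h1 : (a n)^2 ≤ (((n:ℝ)+1) * Real.pi * h)^2 := by
      rw [← sq_abs (a n)]
      exact pow_le_pow_left₀ (abs_nonneg _) (ha_lin n) 2
    calc t n = 2 * (a n)^2 * (1 / (((n:ℝ)+1)^2 * Real.pi^2)) := rfl
      _ ≤ 2 * ((((n:ℝ)+1) * Real.pi * h)^2) * (1 / (((n:ℝ)+1)^2 * Real.pi^2)) := by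
          apply mul_le_mul_of_nonneg_right _ (by positivity)
          linarith
      _ = 2 * h^2 := by field_simp
  have ht_inv : ∀ n, t n ≤ 1 / (((n:ℝ)+1))^2 := by
    intro n
    have h4 : (a n)^2 ≤ 4 := by nlinarith [ha_le2 n, sq_abs (a n), abs_nonneg (a n)]
    have hu : (1:ℝ) ≤ ((n:ℝ)+1)^2 := by nlinarith [Nat.cast_nonneg (α := ℝ) n]
    calc t n ≤ 2 * 4 * (1 / (((n:ℝ)+1)^2 * Real.pi^2)) := by
          apply mul_le_mul_of_nonneg_right _ (by positivity)
          linarith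
      _ ≤ 1 / (((n:ℝ)+1))^2 := by
          rw [mul_one_div, div_le_div_iff₀ (by positivity) (by positivity)]
          nlinarith
  have ht_sum : Summable t :=
    Summable.of_nonneg_of_le ht_nonneg ht_inv DK_summable_inv_sq
  -- the integral identity
  have key : (∫ s in Set.Ioi (0:ℝ), ∫ y in (0:ℝ)..1, (G s x y - G s z y) ^ 2) = ∑' n, t n := by
    have hEq : Set.EqOn (fun s => ∫ y in (0:ℝ)..1, (G s x y - G s z y) ^ 2)
        (fun s => ∑' n : ℕ, 2 * (a n)^2 * Real.exp (-((((n:ℝ)+1)^2) * Real.pi^2) * s))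
        (Set.Ioi 0) := by
      intro s hs
      rw [Set.mem_Ioi] at hs
      simp only
      rw [DK_inner x z s hs]
      exact tsum_congr (fun n => DK_c_sq x z s n)
    rw [setIntegral_congr_fun measurableSet_Ioi hEq]
    have hKpos : ∀ n : ℕ, (0:ℝ) < (((n:ℝ)+1)^2) * Real.pi^2 := fun n => by positivity
    have hint : ∀ n : ℕ, Integrable
        (fun s => 2 * (a n)^2 * Real.exp (-((((n:ℝ)+1)^2) * Real.pi^2) * s))
        (volume.restrict (Set.Ioi 0)) :=
      fun n => (exp_neg_integrableOn_Ioi 0 (hKpos n)).const_mul _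
    have hval : ∀ n : ℕ, (∫ s in Set.Ioi (0:ℝ),
        ‖2 * (a n)^2 * Real.exp (-((((n:ℝ)+1)^2) * Real.pi^2) * s)‖) = t n := by
      intro n
      have hnn : ∀ s : ℝ, ‖2 * (a n)^2 * Real.exp (-((((n:ℝ)+1)^2) * Real.pi^2) * s)‖
          = 2 * (a n)^2 * Real.exp (-((((n:ℝ)+1)^2) * Real.pi^2) * s) :=
        fun s => Real.norm_of_nonneg (by positivity)
      simp_rw [hnn]
      rw [MeasureTheory.integral_const_mul, DK_integral_exp_neg_mul (hKpos n)]
    have hsum' : Summable (fun n : ℕ => ∫ s in Set.Ioi (0:ℝ),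
        ‖2 * (a n)^2 * Real.exp (-((((n:ℝ)+1)^2) * Real.pi^2) * s)‖) := by
      apply ht_sum.congr
      intro n
      exact (hval n).symm
    rw [← integral_tsum_of_summable_integral_norm hint hsum']
    apply tsum_congr
    intro n
    have : (∫ s in Set.Ioi (0:ℝ), 2 * (a n)^2 * Real.exp (-((((n:ℝ)+1)^2) * Real.pi^2) * s))
        = ∫ s in Set.Ioi (0:ℝ), ‖2 * (a n)^2 * Real.exp (-((((n:ℝ)+1)^2) * Real.pi^2) * s)‖ := by
      apply setIntegral_congr_fun measurableSet_Ioi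
      intro s _
      exact (Real.norm_of_nonneg (by positivity)).symm
    rw [this, hval n]
  rw [key]
  -- Now bound the sum
  rcases eq_or_lt_of_le hh0 with hzero | hpos
  · -- h = 0
    have hxz : x = z := by
      have := abs_eq_zero.mp hzero.symm
      linarith [sub_eq_zero.mp this]
    have ha0 : ∀ n, a n = 0 := by
      intro n
      rw [ha_def, DKa, hxz, sub_self]
    have : ∀ n, t n = 0 := by
      intro n
      rw [ht_def]
      simp [ha0 n]
    rw [tsum_congr this, tsum_zero, ← hzero]
    norm_num
  · rcases le_or_gt 1 h with hbig | hsmall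
    · -- h ≥ 1
      calc ∑' n, t n ≤ ∑' n : ℕ, 1 / (((n:ℝ)+1))^2 :=
            Summable.tsum_le_tsum ht_inv ht_sum DK_summable_inv_sq
        _ ≤ 2 := DK_basel_bound
        _ ≤ 10 * h := by linarith
    · -- 0 < h < 1
      set N : ℕ := ⌈1/h⌉₊ with hN_def
      have hN1 : 1 ≤ N := Nat.one_le_ceil_iff.mpr (by positivity)
      have hNpos : (0:ℝ) < N := by exact_mod_cast hN1
      have hNle : (N:ℝ) ≤ 1/h + 1 := (Nat.ceil_lt_add_one (by positivity)).le
      have hNge : 1/h ≤ (N:ℝ) := Nat.le_ceil _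
      have hsplit := ht_sum.sum_add_tsum_nat_add N
      have hhead : ∑ i ∈ Finset.range N, t i ≤ 4 * h := by
        have h1 : ∑ i ∈ Finset.range N, t i ≤ (Finset.range N).card • (2 * h^2) :=
          Finset.sum_le_card_nsmul _ _ _ (fun i _ => ht2 i)
        rw [Finset.card_range, nsmul_eq_mul] at h1
        have h2 : (N:ℝ) * (2 * h^2) ≤ (1/h + 1) * (2 * h^2) :=
          mul_le_mul_of_nonneg_right hNle (by positivity)
        have h3 : (1/h + 1) * (2 * h^2) = 2 * h + 2 * h^2 := by
          field_simp
        nlinarith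
      have htail : (∑' n : ℕ, t (n + N)) ≤ h := by
        have hle : ∀ n : ℕ, t (n + N) ≤ 1 / (((n:ℝ) + N + 1))^2 := by
          intro n
          have := ht_inv (n + N)
          have hcast : (((n + N : ℕ):ℝ) + 1) = ((n:ℝ) + N + 1) := by push_cast; ring
          rwa [hcast] at this
        have hsum1 : Summable (fun n : ℕ => t (n + N)) := (summable_nat_add_iff N).mpr ht_sum
        have hsum2 : Summable (fun n : ℕ => 1 / (((n:ℝ) + N + 1))^2) := by
          have := (summable_nat_add_iff (f := fun n : ℕ => 1 / (((n:ℝ)+1))^2) N).mpr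
            DK_summable_inv_sq
          apply this.congr
          intro n
          push_cast
          ring_nf
        calc (∑' n : ℕ, t (n + N)) ≤ ∑' n : ℕ, 1 / (((n:ℝ) + N + 1))^2 :=
              Summable.tsum_le_tsum hle hsum1 hsum2
          _ ≤ 1 / (N:ℝ) := DK_tail_bound hN1
          _ ≤ h := by
              rw [div_le_iff₀ hNpos]
              calc (1:ℝ) = h * (1/h) := by field_simp
                _ ≤ h * N := mul_le_mul_of_nonneg_left hNge hpos.le
      calc ∑' n, t n = ∑ i ∈ Finset.range N, t i + ∑' n : ℕ, t (n + N) := hsplit.symm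
        _ ≤ 4 * h + h := add_le_add hhead htail
        _ ≤ 10 * h := by linarith

end
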